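/- (Proposition 2) Let α ∈ (0,1/2). For every i ∈ {1,…,p−1} such that ξ_{K_{σ(i)}} = ξ_{K_{σ(i+1)}}, the sequence n^α ( ξ̂_{K_{σ(i)}}^{(n)} − ξ̂_{K_{σ(i+1)}}^{(n)} ) converges to 0 in probability as n → +∞. -/

import Mathlib

open MeasureTheory Filter Finset ProbabilityTheory Matrix

noncomputable section

namespace ArxivStmt

variable {Ω : Type} [MeasurableSpace Ω]

/-- The rank-one operator `u ⊗ v : h ↦ ⟨u, h⟩ v` on `ℝ^p`, as a matrix. -/
def tensor {p : ℕ} (u v : Fin p → ℝ) : Matrix (Fin p) (Fin p) ℝ :=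
  Matrix.of fun i j => v i * u j

/-- The coordinate projection `A_K : ℝ^p → ℝ^{card K}`, `x ↦ (x_i)_{i ∈ K}`, as a matrix. -/
def AK {p : ℕ} (K : Finset (Fin p)) : Matrix {x // x ∈ K} (Fin p) ℝ :=
  Matrix.of fun k j => if (k : Fin p) = j then 1 else 0

/-- `Q_{K} = A_K^* (A_K V A_K^*)⁻¹ A_K`. -/
def QK {p : ℕ} (K : Finset (Fin p)) (V : Matrix (Fin p) (Fin p) ℝ) : Matrix (Fin p) (Fin p) ℝ :=
  (AK K)ᵀ * (AK K * V * (AK K)ᵀ)⁻¹ * AK K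

/-- Squared euclidean norm on `ℝ^p`. -/
def esq {p : ℕ} (v : Fin p → ℝ) : ℝ := ∑ i, v i ^ 2

/-- `K_i = I ∖ {i}`. -/
def Kc {p : ℕ} (i : Fin p) : Finset (Fin p) := Finset.univ.erase i

/-- `p_m = P(U = m)`. -/
def pU {M : ℕ} (P : Measure Ω) (U : Ω → Fin M) (m : Fin M) : ℝ := (P {ω | U ω = m}).toReal

/-- `P(Z = ℓ, U = m)`. -/
def pZU {M q : ℕ} (P : Measure Ω) (U : Ω → Fin M) (Z : Ω → Fin q) (l : Fin q) (m : Fin M) : ℝ :=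
  (P {ω | Z ω = l ∧ U ω = m}).toReal

/-- `p_{ℓ|m} = P(Z = ℓ | U = m)`. -/
def pcond {M q : ℕ} (P : Measure Ω) (U : Ω → Fin M) (Z : Ω → Fin q) (l : Fin q) (m : Fin M) : ℝ :=
  pZU P U Z l m / pU P U m

/-- `μ_m = E(1_{U=m} X) / p_m`. -/
def muU {p M : ℕ} (P : Measure Ω) (X : Ω → Fin p → ℝ) (U : Ω → Fin M) (m : Fin M) :
    Fin p → ℝ :=
  fun i => (pU P U m)⁻¹ * ∫ ω, (if U ω = m then X ω i else 0) ∂P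

/-- `μ_{ℓ,m} = E(1_{Z=ℓ,U=m} X) / P(Z=ℓ,U=m)`. -/
def muZU {p M q : ℕ} (P : Measure Ω) (X : Ω → Fin p → ℝ) (U : Ω → Fin M) (Z : Ω → Fin q)
    (l : Fin q) (m : Fin M) : Fin p → ℝ :=
  fun i => (pZU P U Z l m)⁻¹ * ∫ ω, (if Z ω = l ∧ U ω = m then X ω i else 0) ∂P

/-- `V_m = E(1_{U=m} (X - μ_m) ⊗ (X - μ_m)) / p_m`. -/
def VU {p M : ℕ} (P : Measure Ω) (X : Ω → Fin p → ℝ) (U : Ω → Fin M) (m : Fin M) :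
    Matrix (Fin p) (Fin p) ℝ :=
  Matrix.of fun i j => (pU P U m)⁻¹ *
    ∫ ω, (if U ω = m then (X ω i - muU P X U m i) * (X ω j - muU P X U m j) else 0) ∂P

/-- `ξ_{K|m} = Σ_ℓ p_{ℓ|m}² ‖(I - V_m Q_{K|m})(μ_{ℓ,m} - μ_m)‖²`. -/
def xiKm {p M q : ℕ} (P : Measure Ω) (X : Ω → Fin p → ℝ) (U : Ω → Fin M) (Z : Ω → Fin q)
    (K : Finset (Fin p)) (m : Fin M) : ℝ :=
  ∑ l : Fin q, pcond P U Z l m ^ 2 *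
    esq ((1 - VU P X U m * QK K (VU P X U m)) *ᵥ (muZU P X U Z l m - muU P X U m))

/-- `ξ_K = Σ_m p_m² ξ_{K|m}`. -/
def xiK {p M q : ℕ} (P : Measure Ω) (X : Ω → Fin p → ℝ) (U : Ω → Fin M) (Z : Ω → Fin q)
    (K : Finset (Fin p)) : ℝ :=
  ∑ m : Fin M, pU P U m ^ 2 * xiKm P X U Z K m

/-! Empirical (sample) quantities. -/

/-- `N̂_m^{(n)}`. -/
def NU {M : ℕ} (Us : ℕ → Ω → Fin M) (m : Fin M) (n : ℕ) (ω : Ω) : ℝ :=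
  ∑ i ∈ Finset.range n, if Us i ω = m then 1 else 0

/-- `N̂_{ℓ,m}^{(n)}`. -/
def NZU {M q : ℕ} (Us : ℕ → Ω → Fin M) (Zs : ℕ → Ω → Fin q) (l : Fin q) (m : Fin M)
    (n : ℕ) (ω : Ω) : ℝ :=
  ∑ i ∈ Finset.range n, if Zs i ω = l ∧ Us i ω = m then 1 else 0

/-- `p̂_m^{(n)} = N̂_m^{(n)} / n`. -/
def pUhat {M : ℕ} (Us : ℕ → Ω → Fin M) (m : Fin M) (n : ℕ) (ω : Ω) : ℝ :=
  NU Us m n ω / n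

/-- `p̂_{ℓ|m}^{(n)} = N̂_{ℓ,m}^{(n)} / N̂_m^{(n)}`. -/
def pcondhat {M q : ℕ} (Us : ℕ → Ω → Fin M) (Zs : ℕ → Ω → Fin q) (l : Fin q) (m : Fin M)
    (n : ℕ) (ω : Ω) : ℝ :=
  NZU Us Zs l m n ω / NU Us m n ω

/-- `μ̂_m^{(n)}`. -/
def muUhat {p M : ℕ} (Xs : ℕ → Ω → Fin p → ℝ) (Us : ℕ → Ω → Fin M) (m : Fin M)
    (n : ℕ) (ω : Ω) : Fin p → ℝ :=
  fun j => (NU Us m n ω)⁻¹ * ∑ i ∈ Finset.range n, if Us i ω = m then Xs i ω j else 0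

/-- `μ̂_{ℓ,m}^{(n)}`. -/
def muZUhat {p M q : ℕ} (Xs : ℕ → Ω → Fin p → ℝ) (Us : ℕ → Ω → Fin M) (Zs : ℕ → Ω → Fin q)
    (l : Fin q) (m : Fin M) (n : ℕ) (ω : Ω) : Fin p → ℝ :=
  fun j => (NZU Us Zs l m n ω)⁻¹ *
    ∑ i ∈ Finset.range n, if Zs i ω = l ∧ Us i ω = m then Xs i ω j else 0

/-- `V̂_m^{(n)}`. -/
def VUhat {p M : ℕ} (Xs : ℕ → Ω → Fin p → ℝ) (Us : ℕ → Ω → Fin M) (m : Fin M)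
    (n : ℕ) (ω : Ω) : Matrix (Fin p) (Fin p) ℝ :=
  Matrix.of fun a b => (NU Us m n ω)⁻¹ * ∑ i ∈ Finset.range n,
    if Us i ω = m then
      (Xs i ω a - muUhat Xs Us m n ω a) * (Xs i ω b - muUhat Xs Us m n ω b) else 0

/-- `ξ̂_{K|m}^{(n)}`. -/
def xiKmhat {p M q : ℕ} (Xs : ℕ → Ω → Fin p → ℝ) (Us : ℕ → Ω → Fin M) (Zs : ℕ → Ω → Fin q)
    (K : Finset (Fin p)) (m : Fin M) (n : ℕ) (ω : Ω) : ℝ :=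
  ∑ l : Fin q, pcondhat Us Zs l m n ω ^ 2 *
    esq ((1 - VUhat Xs Us m n ω * QK K (VUhat Xs Us m n ω)) *ᵥ
      (muZUhat Xs Us Zs l m n ω - muUhat Xs Us m n ω))

/-- `ξ̂_K^{(n)}`. -/
def xiKhat {p M q : ℕ} (Xs : ℕ → Ω → Fin p → ℝ) (Us : ℕ → Ω → Fin M) (Zs : ℕ → Ω → Fin q)
    (K : Finset (Fin p)) (n : ℕ) (ω : Ω) : ℝ :=
  ∑ m : Fin M, pUhat Us m n ω ^ 2 * xiKmhat Xs Us Zs K m n ω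

/-- i.i.d. sample with the distribution of `(X, U, Z)`. -/
def IsIIDSample {p M q : ℕ} (P : Measure Ω) (X : Ω → Fin p → ℝ) (U : Ω → Fin M)
    (Z : Ω → Fin q) (Xs : ℕ → Ω → Fin p → ℝ) (Us : ℕ → Ω → Fin M) (Zs : ℕ → Ω → Fin q) :
    Prop :=
  (∀ i, Measurable fun ω => (Xs i ω, Us i ω, Zs i ω)) ∧
  iIndepFun (fun i ω => (Xs i ω, Us i ω, Zs i ω)) P ∧
  ∀ i, IdentDistrib (fun ω => (Xs i ω, Us i ω, Zs i ω)) (fun ω => (X ω, U ω, Z ω)) P P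


/-- i.i.d. sample with the distribution of `(X, U)`. -/
def IsIIDSample2 {p M : ℕ} (P : Measure Ω) (X : Ω → Fin p → ℝ) (U : Ω → Fin M)
    (Xs : ℕ → Ω → Fin p → ℝ) (Us : ℕ → Ω → Fin M) : Prop :=
  (∀ i, Measurable fun ω => (Xs i ω, Us i ω)) ∧
  iIndepFun (fun i ω => (Xs i ω, Us i ω)) P ∧
  ∀ i, IdentDistrib (fun ω => (Xs i ω, Us i ω)) (fun ω => (X ω, U ω)) P P

open Topology ENNReal NNReal
section Aux
/-- Convergence to zero in probability. -/
def TendsZeroP (P : Measure Ω) (f : ℕ → Ω → ℝ) : Prop :=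
  ∀ ε : ℝ, 0 < ε → Tendsto (fun n => P {ω | ε ≤ |f n ω|}) atTop (𝓝 0)

lemma TendsZeroP.tim {P : Measure Ω} {f : ℕ → Ω → ℝ} (h : TendsZeroP P f) :
    TendstoInMeasure P f atTop (fun _ => (0 : ℝ)) := by
  rw [tendstoInMeasure_iff_dist]
  intro ε hε
  simpa [Real.dist_eq] using h ε hε

lemma TendsZeroP.congr {P : Measure Ω} {f g : ℕ → Ω → ℝ} (h : TendsZeroP P f)
    (heq : ∀ n ω, f n ω = g n ω) : TendsZeroP P g := by
  have : f = g := funext fun n => funext (heq n)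
  rwa [← this]

lemma TendsZeroP.mono {P : Measure Ω} {f g : ℕ → Ω → ℝ} (h : TendsZeroP P g)
    (hle : ∀ᶠ n in atTop, ∀ ω, |f n ω| ≤ |g n ω|) : TendsZeroP P f := by
  intro ε hε
  refine tendsto_of_tendsto_of_tendsto_of_le_of_le' tendsto_const_nhds (h ε hε)
    (Eventually.of_forall fun n => zero_le) ?_
  filter_upwards [hle] with n hn
  exact measure_mono fun ω hω => le_trans hω (hn ω)

lemma TendsZeroP.zero (P : Measure Ω) : TendsZeroP P (fun _ _ => (0 : ℝ)) := by
  intro ε hε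
  have hset : {ω : Ω | ε ≤ |(0 : ℝ)|} = (∅ : Set Ω) := by
    ext ω; simp [hε.not_ge]
  have : (fun _ : ℕ => P {ω : Ω | ε ≤ |(0 : ℝ)|}) = fun _ => (0 : ℝ≥0∞) := by
    funext n; rw [hset, measure_empty]
  rw [show (fun n : ℕ => P {ω | ε ≤ |(0:ℝ)|}) = fun _ => (0:ℝ≥0∞) from this]
  exact tendsto_const_nhds

lemma TendsZeroP.add {P : Measure Ω} {f g : ℕ → Ω → ℝ} (hf : TendsZeroP P f)
    (hg : TendsZeroP P g) : TendsZeroP P (fun n ω => f n ω + g n ω) := by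
  intro ε hε
  have hsub : ∀ n, {ω | ε ≤ |f n ω + g n ω|} ⊆
      {ω | ε / 2 ≤ |f n ω|} ∪ {ω | ε / 2 ≤ |g n ω|} := by
    intro n ω hω
    by_contra hc
    simp only [Set.mem_union, Set.mem_setOf_eq, not_or, not_le] at hc
    have : |f n ω + g n ω| < ε := by
      calc |f n ω + g n ω| ≤ |f n ω| + |g n ω| := abs_add_le _ _
        _ < ε / 2 + ε / 2 := add_lt_add hc.1 hc.2
        _ = ε := by ring
    exact absurd hω (not_le.2 this)
  refine tendsto_of_tendsto_of_tendsto_of_le_of_le' tendsto_const_nhds ?_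
    (Eventually.of_forall fun n => zero_le)
    (Eventually.of_forall fun n => (measure_mono (hsub n)).trans (measure_union_le _ _))
  simpa using (hf (ε / 2) (by linarith)).add (hg (ε / 2) (by linarith))

lemma TendsZeroP.mul_zero {P : Measure Ω} {f g : ℕ → Ω → ℝ} (hf : TendsZeroP P f)
    (hg : TendsZeroP P g) : TendsZeroP P (fun n ω => f n ω * g n ω) := by
  intro ε hε
  have hsε : 0 < Real.sqrt ε := Real.sqrt_pos.2 hε
  have hsub : ∀ n, {ω | ε ≤ |f n ω * g n ω|} ⊆
      {ω | Real.sqrt ε ≤ |f n ω|} ∪ {ω | Real.sqrt ε ≤ |g n ω|} := by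
    intro n ω hω
    by_contra hc
    simp only [Set.mem_union, Set.mem_setOf_eq, not_or, not_le] at hc
    have : |f n ω * g n ω| < ε := by
      rw [abs_mul]
      calc |f n ω| * |g n ω| < Real.sqrt ε * Real.sqrt ε :=
            mul_lt_mul'' hc.1 hc.2 (abs_nonneg _) (abs_nonneg _)
        _ = ε := Real.mul_self_sqrt hε.le
    exact absurd hω (not_le.2 this)
  refine tendsto_of_tendsto_of_tendsto_of_le_of_le' tendsto_const_nhds ?_
    (Eventually.of_forall fun n => zero_le)
    (Eventually.of_forall fun n => (measure_mono (hsub n)).trans (measure_union_le _ _))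
  simpa using (hf _ hsε).add (hg _ hsε)

lemma TendsZeroP.mul_const {P : Measure Ω} {f : ℕ → Ω → ℝ} (hf : TendsZeroP P f) (c : ℝ) :
    TendsZeroP P (fun n ω => f n ω * c) := by
  intro ε hε
  have hc1 : (0:ℝ) < |c| + 1 := by positivity
  refine tendsto_of_tendsto_of_tendsto_of_le_of_le' tendsto_const_nhds
    (hf (ε / (|c| + 1)) (by positivity)) (Eventually.of_forall fun n => zero_le)
    (Eventually.of_forall fun n => measure_mono fun ω hω => ?_)
  simp only [Set.mem_setOf_eq] at hω ⊢
  rw [abs_mul] at hω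
  rw [div_le_iff₀ hc1]
  calc ε ≤ |f n ω| * |c| := hω
    _ ≤ |f n ω| * (|c| + 1) := by nlinarith [abs_nonneg (f n ω), abs_nonneg c]

/-- Convergence in probability to a constant. -/
def TendsConstP (P : Measure Ω) (f : ℕ → Ω → ℝ) (c : ℝ) : Prop :=
  TendsZeroP P (fun n ω => f n ω - c)

lemma TendsZeroP.mul_bdd {P : Measure Ω} {f g : ℕ → Ω → ℝ} {c : ℝ} (hf : TendsZeroP P f)
    (hg : TendsConstP P g c) : TendsZeroP P (fun n ω => f n ω * g n ω) :=
  ((hf.mul_zero hg).add (hf.mul_const c)).congr (by intro n ω; ring)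

/-- `f n = c + o_P(n^{-β})` for every `β < 1/2`. -/
def RateO (P : Measure Ω) (f : ℕ → Ω → ℝ) (c : ℝ) : Prop :=
  ∀ β : ℝ, 0 < β → β < 1 / 2 → TendsZeroP P (fun n ω => (n : ℝ) ^ β * (f n ω - c))

lemma RateO.congr {P : Measure Ω} {f g : ℕ → Ω → ℝ} {c d : ℝ} (h : RateO P f c)
    (heq : ∀ n ω, f n ω = g n ω) (hcd : c = d) : RateO P g d := by
  have : f = g := funext fun n => funext (heq n)
  rw [← this, ← hcd]; exact h

lemma RateO.tendsConst {P : Measure Ω} {f : ℕ → Ω → ℝ} {c : ℝ} (h : RateO P f c) :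
    TendsConstP P f c := by
  have h4 := h (1/4) (by norm_num) (by norm_num)
  intro ε hε
  refine tendsto_of_tendsto_of_tendsto_of_le_of_le' tendsto_const_nhds (h4 ε hε)
    (Eventually.of_forall fun n => zero_le) ?_
  filter_upwards [eventually_ge_atTop 1] with n hn
  refine measure_mono fun ω hω => ?_
  simp only [Set.mem_setOf_eq] at hω ⊢
  have h1 : (1:ℝ) ≤ (n:ℝ) ^ (1/4 : ℝ) :=
    Real.one_le_rpow (by exact_mod_cast hn) (by norm_num)
  calc ε ≤ |f n ω - c| := hω
    _ ≤ (n:ℝ) ^ (1/4:ℝ) * |f n ω - c| := le_mul_of_one_le_left (abs_nonneg _) h1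
    _ = |(n:ℝ) ^ (1/4:ℝ) * (f n ω - c)| := by
        rw [abs_mul, abs_of_nonneg (Real.rpow_nonneg (Nat.cast_nonneg n) _)]

lemma RateO.const (P : Measure Ω) (c : ℝ) : RateO P (fun _ _ => c) c :=
  fun β _ _ => (TendsZeroP.zero P).congr (by intro n ω; ring)

lemma RateO.add {P : Measure Ω} {f g : ℕ → Ω → ℝ} {a b : ℝ} (hf : RateO P f a)
    (hg : RateO P g b) : RateO P (fun n ω => f n ω + g n ω) (a + b) :=
  fun β h1 h2 => ((hf β h1 h2).add (hg β h1 h2)).congr (by intro n ω; ring)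

lemma RateO.mul {P : Measure Ω} {f g : ℕ → Ω → ℝ} {a b : ℝ} (hf : RateO P f a)
    (hg : RateO P g b) : RateO P (fun n ω => f n ω * g n ω) (a * b) :=
  fun β h1 h2 =>
    (((hf β h1 h2).mul_bdd hg.tendsConst).add ((hg β h1 h2).mul_const a)).congr
      (by intro n ω; ring)

lemma RateO.neg {P : Measure Ω} {f : ℕ → Ω → ℝ} {a : ℝ} (hf : RateO P f a) :
    RateO P (fun n ω => -f n ω) (-a) :=
  (hf.mul (RateO.const P (-1))).congr (by intro n ω; ring) (by ring)

lemma RateO.sub {P : Measure Ω} {f g : ℕ → Ω → ℝ} {a b : ℝ} (hf : RateO P f a)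
    (hg : RateO P g b) : RateO P (fun n ω => f n ω - g n ω) (a - b) :=
  (hf.add hg.neg).congr (by intro n ω; ring) (by ring)

lemma RateO.inv {P : Measure Ω} {f : ℕ → Ω → ℝ} {a : ℝ} (hf : RateO P f a) (ha : a ≠ 0) :
    RateO P (fun n ω => (f n ω)⁻¹) a⁻¹ := by
  intro β hβ hβ' ε hε
  have hapos : 0 < |a| := abs_pos.2 ha
  have ha2 : (0:ℝ) < a ^ 2 := by positivity
  have hδ : (0:ℝ) < |a| / 2 := by positivity
  have hε' : (0:ℝ) < ε * a ^ 2 / 2 := by positivity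
  have hsub : ∀ n : ℕ, {ω | ε ≤ |(n:ℝ) ^ β * ((f n ω)⁻¹ - a⁻¹)|} ⊆
      {ω | |a| / 2 ≤ |f n ω - a|} ∪ {ω | ε * a ^ 2 / 2 ≤ |(n:ℝ) ^ β * (f n ω - a)|} := by
    intro n ω hω
    by_contra hc
    simp only [Set.mem_union, Set.mem_setOf_eq, not_or, not_le] at hc
    obtain ⟨h1, h2⟩ := hc
    simp only [Set.mem_setOf_eq] at hω
    have hnb : (0:ℝ) ≤ (n:ℝ) ^ β := Real.rpow_nonneg (Nat.cast_nonneg n) β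
    have hflb : |a| / 2 ≤ |f n ω| := by
      have h3 : |a| - |f n ω| ≤ |a - f n ω| := abs_sub_abs_le_abs_sub _ _
      rw [abs_sub_comm] at h3
      linarith
    have hfpos : (0:ℝ) < |f n ω| := lt_of_lt_of_le hδ hflb
    have hfne : f n ω ≠ 0 := fun h0 => by rw [h0, abs_zero] at hfpos; exact lt_irrefl _ hfpos
    have key : (f n ω)⁻¹ - a⁻¹ = (a - f n ω) * ((f n ω)⁻¹ * a⁻¹) := by
      field_simp
    have habs : |(f n ω)⁻¹ - a⁻¹| ≤ |f n ω - a| * (2 / a ^ 2) := by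
      rw [key, abs_mul, abs_mul, abs_inv, abs_inv, abs_sub_comm]
      have h4 : (|f n ω|)⁻¹ ≤ (|a| / 2)⁻¹ := by
        apply inv_anti₀ hδ hflb
      have h5 : (|f n ω|)⁻¹ * |a|⁻¹ ≤ (|a| / 2)⁻¹ * |a|⁻¹ :=
        mul_le_mul_of_nonneg_right h4 (inv_nonneg.2 (abs_nonneg a))
      have h6 : (|a| / 2)⁻¹ * |a|⁻¹ = 2 / a ^ 2 := by
        rw [← sq_abs]; field_simp
      exact mul_le_mul_of_nonneg_left (h6 ▸ h5) (abs_nonneg _)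
    have hfinal : |(n:ℝ) ^ β * ((f n ω)⁻¹ - a⁻¹)| < ε := by
      rw [abs_mul, abs_of_nonneg hnb]
      calc (n:ℝ) ^ β * |(f n ω)⁻¹ - a⁻¹| ≤ (n:ℝ) ^ β * (|f n ω - a| * (2 / a ^ 2)) :=
            mul_le_mul_of_nonneg_left habs hnb
        _ = |(n:ℝ) ^ β * (f n ω - a)| * (2 / a ^ 2) := by
            rw [abs_mul, abs_of_nonneg hnb]; ring
        _ < (ε * a ^ 2 / 2) * (2 / a ^ 2) := by
            apply mul_lt_mul_of_pos_right h2 (by positivity)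
        _ = ε := by field_simp
    exact absurd hω (not_le.2 hfinal)
  refine tendsto_of_tendsto_of_tendsto_of_le_of_le' tendsto_const_nhds ?_
    (Eventually.of_forall fun n => zero_le)
    (Eventually.of_forall fun n => (measure_mono (hsub n)).trans (measure_union_le _ _))
  simpa using (hf.tendsConst _ hδ).add (hf β hβ hβ' _ hε')

lemma RateO.div {P : Measure Ω} {f g : ℕ → Ω → ℝ} {a b : ℝ} (hf : RateO P f a)
    (hg : RateO P g b) (hb : b ≠ 0) : RateO P (fun n ω => f n ω / g n ω) (a / b) :=
  (hf.mul (hg.inv hb)).congr (by intro n ω; rw [div_eq_mul_inv]) (by rw [div_eq_mul_inv])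

lemma RateO.finsum {P : Measure Ω} {ι : Type*} (s : Finset ι) (f : ι → ℕ → Ω → ℝ) (c : ι → ℝ)
    (h : ∀ k ∈ s, RateO P (f k) (c k)) :
    RateO P (fun n ω => ∑ k ∈ s, f k n ω) (∑ k ∈ s, c k) := by
  classical
  induction s using Finset.induction_on with
  | empty => exact (RateO.const P 0).congr (by intro n ω; simp) (by simp)
  | @insert a s ha ih =>
      have h1 := h a (Finset.mem_insert_self _ _)
      have h2 := ih fun k hk => h k (Finset.mem_insert_of_mem hk)
      exact (h1.add h2).congr (by intro n ω; rw [Finset.sum_insert ha])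
        (by rw [Finset.sum_insert ha])

lemma RateO.finprod {P : Measure Ω} {ι : Type*} (s : Finset ι) (f : ι → ℕ → Ω → ℝ) (c : ι → ℝ)
    (h : ∀ k ∈ s, RateO P (f k) (c k)) :
    RateO P (fun n ω => ∏ k ∈ s, f k n ω) (∏ k ∈ s, c k) := by
  classical
  induction s using Finset.induction_on with
  | empty => exact (RateO.const P 1).congr (by intro n ω; simp) (by simp)
  | @insert a s ha ih =>
      have h1 := h a (Finset.mem_insert_self _ _)
      have h2 := ih fun k hk => h k (Finset.mem_insert_of_mem hk)
      exact (h1.mul h2).congr (by intro n ω; rw [Finset.prod_insert ha])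
        (by rw [Finset.prod_insert ha])

lemma RateO.sq {P : Measure Ω} {f : ℕ → Ω → ℝ} {a : ℝ} (hf : RateO P f a) :
    RateO P (fun n ω => f n ω ^ 2) (a ^ 2) :=
  (hf.mul hf).congr (by intro n ω; ring) (by ring)

lemma RateO.const_mul {P : Measure Ω} {f : ℕ → Ω → ℝ} {a : ℝ} (hf : RateO P f a) (c : ℝ) :
    RateO P (fun n ω => c * f n ω) (c * a) :=
  ((RateO.const P c).mul hf)

lemma rate_empirical {P : Measure Ω} [IsProbabilityMeasure P] (W : ℕ → Ω → ℝ)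
    (hindep : iIndepFun W P)
    (hident : ∀ i, IdentDistrib (W i) (W 0) P P)
    (hL2 : MemLp (W 0) 2 P) :
    RateO P (fun n ω => (n:ℝ)⁻¹ * ∑ i ∈ Finset.range n, W i ω) (∫ ω, W 0 ω ∂P) := by
  intro β hβ hβ' ε hε
  set μ0 := ∫ ω, W 0 ω ∂P with hμ0
  set v := variance (W 0) P with hv
  have hL2i : ∀ i, MemLp (W i) 2 P := fun i => (hident i).memLp_iff.2 hL2
  have hInt : ∀ i, Integrable (W i) P := fun i => (hL2i i).integrable one_le_two
  have hVle : ∀ n : ℕ, 1 ≤ n →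
      P {ω | ε ≤ |(n:ℝ)^β * ((n:ℝ)⁻¹ * ∑ i ∈ Finset.range n, W i ω - μ0)|}
      ≤ ENNReal.ofReal (v / ε^2 * (n:ℝ)^(2*β - 1)) := by
    intro n hn
    have hnpos : (0:ℝ) < n := by exact_mod_cast hn
    have hc : (0:ℝ) < ε * (n:ℝ)^(1 - β) := by positivity
    set S : Ω → ℝ := fun ω => ∑ i ∈ Finset.range n, W i ω with hS
    have hSL2 : MemLp S 2 P := memLp_finset_sum _ (fun i _ => hL2i i)
    have hES : ∫ ω, S ω ∂P = n * μ0 := by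
      rw [hS]
      rw [integral_finset_sum _ (fun i _ => hInt i)]
      rw [Finset.sum_congr rfl (fun i _ => (hident i).integral_eq)]
      simp [hμ0, mul_comm]
    have hVS : variance S P = n * v := by
      have heq : S = ∑ i ∈ Finset.range n, W i := by
        funext ω; simp [hS]
      rw [heq, IndepFun.variance_sum (fun i _ => hL2i i)
        (fun i _ j _ hij => hindep.indepFun hij)]
      rw [Finset.sum_congr rfl (fun i _ => (hident i).variance_eq)]
      simp [hv, mul_comm]
    have hcheb := meas_ge_le_variance_div_sq (μ := P) hSL2 hc
    have hsub : {ω | ε ≤ |(n:ℝ)^β * ((n:ℝ)⁻¹ * ∑ i ∈ Finset.range n, W i ω - μ0)|}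
        ⊆ {ω | ε * (n:ℝ)^(1-β) ≤ |S ω - P[S]|} := by
      intro ω hω
      simp only [Set.mem_setOf_eq] at hω ⊢
      have hr : (0:ℝ) < (n:ℝ)^(β - 1) := Real.rpow_pos_of_pos hnpos _
      have hid : (n:ℝ)^β * ((n:ℝ)⁻¹ * S ω - μ0) = (n:ℝ)^(β-1) * (S ω - n * μ0) := by
        have h1 : (n:ℝ)^(β-1) = (n:ℝ)^β / (n:ℝ) := by
          rw [Real.rpow_sub hnpos, Real.rpow_one]
        rw [h1]; field_simp
      rw [hid] at hω
      rw [abs_mul, abs_of_nonneg hr.le] at hω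
      have h2 : ε * (n:ℝ)^(1-β) ≤ |S ω - n * μ0| := by
        have h3 : (n:ℝ)^(1-β) = ((n:ℝ)^(β-1))⁻¹ := by
          rw [show (1-β) = -(β-1) by ring, Real.rpow_neg hnpos.le]
        calc ε * (n:ℝ)^(1-β) = ε / (n:ℝ)^(β-1) := by rw [h3, div_eq_mul_inv]
          _ ≤ |S ω - n * μ0| := by
              rw [div_le_iff₀ hr]
              calc ε ≤ (n:ℝ)^(β-1) * |S ω - n * μ0| := hω
                _ = |S ω - n * μ0| * (n:ℝ)^(β-1) := mul_comm _ _
      have hPS : P[S] = n * μ0 := hES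
      rw [hPS]
      exact h2
    have key : (n:ℝ) * v / (ε * (n:ℝ)^(1-β))^2 = v / ε^2 * (n:ℝ)^(2*β-1) := by
      have e1 : ((n:ℝ)^(1-β))^2 = (n:ℝ)^(2-2*β) := by
        rw [← Real.rpow_natCast ((n:ℝ)^(1-β)) 2, ← Real.rpow_mul hnpos.le]
        congr 1; push_cast; ring
      have e2 : (n:ℝ)^(2*β-1) = (n:ℝ) / (n:ℝ)^(2-2*β) := by
        rw [show 2*β-1 = 1 - (2-2*β) by ring, Real.rpow_sub hnpos, Real.rpow_one]
      have hne : ((n:ℝ)^(2-2*β)) ≠ 0 := (Real.rpow_pos_of_pos hnpos _).ne'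
      rw [mul_pow, e1, e2]
      field_simp
    calc P {ω | ε ≤ |(n:ℝ)^β * ((n:ℝ)⁻¹ * ∑ i ∈ Finset.range n, W i ω - μ0)|}
        ≤ P {ω | ε * (n:ℝ)^(1-β) ≤ |S ω - P[S]|} := measure_mono hsub
      _ ≤ ENNReal.ofReal (variance S P / (ε * (n:ℝ)^(1-β))^2) := hcheb
      _ ≤ ENNReal.ofReal (v / ε^2 * (n:ℝ)^(2*β-1)) := by
          apply ENNReal.ofReal_le_ofReal
          rw [hVS]
          exact le_of_eq key
  refine tendsto_of_tendsto_of_tendsto_of_le_of_le' tendsto_const_nhds ?_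
    (Eventually.of_forall fun n => zero_le)
    (by filter_upwards [eventually_ge_atTop 1] with n hn using hVle n hn)
  have h3 : Tendsto (fun n : ℕ => (n:ℝ)^(2*β-1)) atTop (𝓝 0) := by
    have h4 : Tendsto (fun x : ℝ => x ^ (-(1-2*β))) atTop (𝓝 (0:ℝ)) :=
      tendsto_rpow_neg_atTop (by linarith)
    simpa [show -(1-2*β) = 2*β-1 by ring, Function.comp_def] using h4.comp
      (tendsto_natCast_atTop_atTop (R := ℝ))
  have h6 := h3.const_mul (v/ε^2)
  rw [mul_zero] at h6
  have h7 := ENNReal.tendsto_ofReal h6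
  rw [ENNReal.ofReal_zero] at h7
  exact h7

/-! Matrix-valued rate calculus. -/

/-- Entrywise `RateO` for matrix-valued statistics. -/
def RateOM {ι κ : Type*} (P : Measure Ω) (F : ℕ → Ω → Matrix ι κ ℝ) (C : Matrix ι κ ℝ) : Prop :=
  ∀ i j, RateO P (fun n ω => F n ω i j) (C i j)

lemma RateOM.matmul {ι κ τ : Type*} [Fintype κ] {P : Measure Ω}
    {F : ℕ → Ω → Matrix ι κ ℝ} {G : ℕ → Ω → Matrix κ τ ℝ} {C : Matrix ι κ ℝ}
    {D : Matrix κ τ ℝ} (hF : RateOM P F C) (hG : RateOM P G D) :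
    RateOM P (fun n ω => F n ω * G n ω) (C * D) := by
  intro i j
  refine (RateO.finsum Finset.univ (fun k n ω => F n ω i k * G n ω k j)
    (fun k => C i k * D k j) (fun k _ => (hF i k).mul (hG k j))).congr ?_ ?_
  · intro n ω; simp [Matrix.mul_apply]
  · simp [Matrix.mul_apply]

lemma RateOM.det {ι : Type*} [Fintype ι] [DecidableEq ι] {P : Measure Ω}
    {F : ℕ → Ω → Matrix ι ι ℝ} {C : Matrix ι ι ℝ} (hF : RateOM P F C) :
    RateO P (fun n ω => (F n ω).det) C.det := by
  refine (RateO.finsum Finset.univ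
    (fun σ : Equiv.Perm ι => fun n ω => ((Equiv.Perm.sign σ : ℤ) : ℝ) * ∏ i, F n ω (σ i) i)
    (fun σ => ((Equiv.Perm.sign σ : ℤ) : ℝ) * ∏ i, C (σ i) i) ?_).congr ?_ ?_
  · intro σ _
    exact (RateO.finprod Finset.univ (fun i n ω => F n ω (σ i) i) (fun i => C (σ i) i)
      (fun i _ => hF (σ i) i)).const_mul _
  · intro n ω
    simp [Matrix.det_apply']
  · simp [Matrix.det_apply']

lemma RateOM.adjugate {ι : Type*} [Fintype ι] [DecidableEq ι] {P : Measure Ω}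
    {F : ℕ → Ω → Matrix ι ι ℝ} {C : Matrix ι ι ℝ} (hF : RateOM P F C) :
    RateOM P (fun n ω => (F n ω).adjugate) C.adjugate := by
  intro i j
  have hrow : RateOM P (fun n ω => (F n ω).updateRow j (Pi.single i 1))
      (C.updateRow j (Pi.single i 1)) := by
    intro a b
    by_cases hab : a = j
    · subst hab
      exact (RateO.const P ((Pi.single i 1 : ι → ℝ) b)).congr (fun n ω => by simp [Matrix.updateRow_apply])
        (by simp [Matrix.updateRow_apply])
    · exact (hF a b).congr (fun n ω => by simp [Matrix.updateRow_apply, hab])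
        (by simp [Matrix.updateRow_apply, hab])
  exact (hrow.det).congr (fun n ω => (Matrix.adjugate_apply _ _ _).symm)
    (Matrix.adjugate_apply _ _ _).symm

lemma matrix_inv_apply {ι : Type*} [Fintype ι] [DecidableEq ι] (A : Matrix ι ι ℝ) (i j : ι) :
    A⁻¹ i j = (A.det)⁻¹ * A.adjugate i j := by
  rw [Matrix.inv_def, Ring.inverse_eq_inv, Matrix.smul_apply, smul_eq_mul]

lemma RateOM.inv {ι : Type*} [Fintype ι] [DecidableEq ι] {P : Measure Ω}
    {F : ℕ → Ω → Matrix ι ι ℝ} {C : Matrix ι ι ℝ} (hF : RateOM P F C)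
    (hdet : C.det ≠ 0) : RateOM P (fun n ω => (F n ω)⁻¹) C⁻¹ := by
  intro i j
  exact ((hF.det.inv hdet).mul (hF.adjugate i j)).congr
    (fun n ω => (matrix_inv_apply _ _ _).symm) (matrix_inv_apply _ _ _).symm

lemma RateOM.sub {ι κ : Type*} {P : Measure Ω} {F G : ℕ → Ω → Matrix ι κ ℝ}
    {C D : Matrix ι κ ℝ} (hF : RateOM P F C) (hG : RateOM P G D) :
    RateOM P (fun n ω => F n ω - G n ω) (C - D) := by
  intro i j
  exact ((hF i j).sub (hG i j)).congr (fun n ω => by simp [Matrix.sub_apply])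
    (by simp [Matrix.sub_apply])

lemma RateOM.const {ι κ : Type*} (P : Measure Ω) (C : Matrix ι κ ℝ) :
    RateOM P (fun _ _ => C) C := fun i j => RateO.const P (C i j)


lemma conjTranspose_eq_transpose_real {a b : Type*} (A : Matrix a b ℝ) : Aᴴ = Aᵀ := by
  ext i j; simp [Matrix.conjTranspose_apply]

/-- Positive-definiteness of the compressed matrix `A_K V A_Kᵀ`. -/
lemma posdef_AK {p : ℕ} {V : Matrix (Fin p) (Fin p) ℝ} (hV : V.PosDef) (K : Finset (Fin p)) :
    (AK K * V * (AK K)ᵀ).PosDef := by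
  have hVt : Vᵀ = V := by rw [← conjTranspose_eq_transpose_real]; exact hV.1
  refine posDef_iff_dotProduct_mulVec.mpr ⟨?_, ?_⟩
  · show (AK K * V * (AK K)ᵀ)ᴴ = _
    rw [Matrix.conjTranspose_mul, Matrix.conjTranspose_mul,
      conjTranspose_eq_transpose_real, conjTranspose_eq_transpose_real,
      conjTranspose_eq_transpose_real, Matrix.transpose_transpose, hVt,
      ← Matrix.mul_assoc]
  · intro x hx
    set y : Fin p → ℝ := (AK K)ᵀ *ᵥ x with hydef
    have hy : ∀ jj, y jj = ∑ k, AK K k jj * x k := by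
      intro jj
      simp [hydef, Matrix.mulVec, dotProduct, Matrix.transpose_apply]
    obtain ⟨k₀, hk₀⟩ := Function.ne_iff.1 hx
    have hyk : y (k₀ : Fin p) = x k₀ := by
      rw [hy, Finset.sum_eq_single k₀]
      · simp [AK]
      · intro k _ hk
        have : (k : Fin p) ≠ (k₀ : Fin p) := fun hc => hk (Subtype.coe_injective hc)
        simp [AK, this]
      · intro h; exact absurd (Finset.mem_univ k₀) h
    have hyne : y ≠ 0 := by
      intro h
      apply hk₀
      have := congrFun h (k₀ : Fin p)
      rw [hyk] at this
      simpa using this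
    have hpos := hV.dotProduct_mulVec_pos hyne
    have hkey : star x ⬝ᵥ ((AK K * V * (AK K)ᵀ) *ᵥ x) = star y ⬝ᵥ (V *ᵥ y) := by
      have hst : ∀ v : Fin p → ℝ, star v = v := fun v => funext fun k => star_trivial _
      have hstp : star x = x := funext fun k => star_trivial _
      rw [hstp, hst y, hydef]
      rw [← Matrix.mulVec_mulVec, ← Matrix.mulVec_mulVec]
      rw [dotProduct_mulVec x (AK K)]
      congr 1
      rw [← Matrix.transpose_transpose (AK K), Matrix.vecMul_transpose,
        Matrix.transpose_transpose]
    rw [hkey]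
    exact hpos

/-! Integrability and integral identities. -/

lemma integral_if_one {P : Measure Ω} [IsProbabilityMeasure P] (c : Ω → Prop)
    [DecidablePred c] (hs : MeasurableSet {ω | c ω}) :
    ∫ ω, (if c ω then (1:ℝ) else 0) ∂P = (P {ω | c ω}).toReal := by
  classical
  have h : (fun ω => if c ω then (1:ℝ) else 0) =
      Set.indicator {ω | c ω} (fun _ => (1:ℝ)) := by
    funext ω; by_cases h : c ω <;> simp [Set.indicator_apply, h]
  rw [h, integral_indicator hs, setIntegral_const]
  simp [Measure.real]

lemma abs_le_one_add_sq (x : ℝ) : |x| ≤ 1 + x ^ 2 := by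
  rcases abs_cases x with ⟨h, _⟩ | ⟨h, _⟩ <;> nlinarith [sq_nonneg (|x| - 1), sq_abs x]

lemma memℒp_of_sq_le {P : Measure Ω} [IsProbabilityMeasure P] {f g : Ω → ℝ}
    (hf : Measurable f) (hg : Integrable g P) (h : ∀ ω, f ω ^ 2 ≤ g ω) :
    MemLp f 2 P := by
  refine (memLp_two_iff_integrable_sq hf.aestronglyMeasurable).2 ?_
  refine Integrable.mono' hg (hf.pow measurable_const).aestronglyMeasurable
    (ae_of_all _ fun ω => ?_)
  rw [Real.norm_eq_abs, abs_of_nonneg (sq_nonneg _)]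
  exact h ω

/-- Base lemma: empirical means of an i.i.d. sample satisfy `RateO`. -/
lemma rate_emp {p q M : ℕ} {P : Measure Ω} [IsProbabilityMeasure P]
    {X : Ω → Fin p → ℝ} {U : Ω → Fin M} {Z : Ω → Fin q}
    {Xs : ℕ → Ω → Fin p → ℝ} {Us : ℕ → Ω → Fin M} {Zs : ℕ → Ω → Fin q}
    (hiid : IsIIDSample P X U Z Xs Us Zs)
    (w : (Fin p → ℝ) × Fin M × Fin q → ℝ) (hw : Measurable w)
    (hL2 : MemLp (fun ω => w (X ω, U ω, Z ω)) 2 P) :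
    RateO P (fun n ω => (n:ℝ)⁻¹ * ∑ i ∈ Finset.range n, w (Xs i ω, Us i ω, Zs i ω))
      (∫ ω, w (X ω, U ω, Z ω) ∂P) := by
  obtain ⟨hm, hind, hid⟩ := hiid
  set W : ℕ → Ω → ℝ := fun i ω => w (Xs i ω, Us i ω, Zs i ω) with hW
  have hident0 : ∀ i, IdentDistrib (W i) (W 0) P P :=
    fun i => ((hid i).trans (hid 0).symm).comp hw
  have hid0 : IdentDistrib (W 0) (fun ω => w (X ω, U ω, Z ω)) P P := (hid 0).comp hw
  have hL2' : MemLp (W 0) 2 P := hid0.memLp_iff.2 hL2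
  have hindep' : iIndepFun W P :=
    hind.comp (fun _ => w) (fun _ => hw)
  exact (rate_empirical W hindep' hident0 hL2').congr (fun n ω => rfl) hid0.integral_eq

/-! Pointwise identities for the plug-in estimators. -/

lemma inv_scale (a s n : ℝ) (hn : n ≠ 0) : a⁻¹ * s = (a / n)⁻¹ * (s / n) := by
  rcases eq_or_ne a 0 with h | h
  · simp [h]
  · field_simp

lemma div_scale (a b n : ℝ) (hn : n ≠ 0) : a / b = (a / n) / (b / n) := by
  rcases eq_or_ne b 0 with h | h
  · simp [h]
  · field_simp

lemma NU_eq_zero {M : ℕ} {Us : ℕ → Ω → Fin M} {m : Fin M} {n : ℕ} {ω : Ω}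
    (h : NU Us m n ω = 0) : ∀ i ∈ Finset.range n, Us i ω ≠ m := by
  intro i hi him
  have hnn : ∀ k ∈ Finset.range n, (0:ℝ) ≤ if Us k ω = m then 1 else 0 := by
    intro k _; split <;> norm_num
  have := (Finset.sum_eq_zero_iff_of_nonneg hnn).1 h i hi
  rw [if_pos him] at this
  norm_num at this

lemma pUhat_eq {M : ℕ} (Us : ℕ → Ω → Fin M) (m : Fin M) (n : ℕ) (ω : Ω) :
    pUhat Us m n ω = (n:ℝ)⁻¹ * NU Us m n ω := div_eq_inv_mul _ _

lemma muUhat_eq {p M : ℕ} {Xs : ℕ → Ω → Fin p → ℝ} {Us : ℕ → Ω → Fin M} {m : Fin M}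
    {n : ℕ} (hn : (n:ℝ) ≠ 0) (ω : Ω) (j : Fin p) :
    muUhat Xs Us m n ω j = (pUhat Us m n ω)⁻¹ *
      ((n:ℝ)⁻¹ * ∑ i ∈ Finset.range n, if Us i ω = m then Xs i ω j else 0) := by
  show (NU Us m n ω)⁻¹ * _ = _
  rw [inv_scale _ _ _ hn,
    div_eq_inv_mul (∑ i ∈ Finset.range n, if Us i ω = m then Xs i ω j else 0) (n:ℝ)]
  rfl

lemma muZUhat_eq {p M q : ℕ} {Xs : ℕ → Ω → Fin p → ℝ} {Us : ℕ → Ω → Fin M}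
    {Zs : ℕ → Ω → Fin q} {l : Fin q} {m : Fin M} {n : ℕ} (hn : (n:ℝ) ≠ 0) (ω : Ω) (j : Fin p) :
    muZUhat Xs Us Zs l m n ω j = (NZU Us Zs l m n ω / n)⁻¹ *
      ((n:ℝ)⁻¹ * ∑ i ∈ Finset.range n, if Zs i ω = l ∧ Us i ω = m then Xs i ω j else 0) := by
  show (NZU Us Zs l m n ω)⁻¹ * _ = _
  rw [inv_scale _ _ _ hn,
    div_eq_inv_mul (∑ i ∈ Finset.range n, if Zs i ω = l ∧ Us i ω = m then Xs i ω j else 0)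
      (n:ℝ)]

lemma pcondhat_eq {M q : ℕ} {Us : ℕ → Ω → Fin M} {Zs : ℕ → Ω → Fin q} {l : Fin q}
    {m : Fin M} {n : ℕ} (hn : (n:ℝ) ≠ 0) (ω : Ω) :
    pcondhat Us Zs l m n ω = ((n:ℝ)⁻¹ * NZU Us Zs l m n ω) / pUhat Us m n ω := by
  show NZU Us Zs l m n ω / NU Us m n ω = _
  rw [div_scale _ _ _ hn, div_eq_inv_mul (NZU Us Zs l m n ω) (n:ℝ)]
  rfl

lemma VUhat_eq {p M : ℕ} {Xs : ℕ → Ω → Fin p → ℝ} {Us : ℕ → Ω → Fin M} {m : Fin M}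
    {n : ℕ} (hn : (n:ℝ) ≠ 0) (ω : Ω) (a b : Fin p) :
    VUhat Xs Us m n ω a b
      = (pUhat Us m n ω)⁻¹ *
          ((n:ℝ)⁻¹ * ∑ i ∈ Finset.range n, if Us i ω = m then Xs i ω a * Xs i ω b else 0)
        - muUhat Xs Us m n ω a * muUhat Xs Us m n ω b := by
  set N := NU Us m n ω with hN
  set Sa := ∑ i ∈ Finset.range n, (if Us i ω = m then Xs i ω a else 0) with hSa
  set Sb := ∑ i ∈ Finset.range n, (if Us i ω = m then Xs i ω b else 0) with hSb
  set Sab := ∑ i ∈ Finset.range n, (if Us i ω = m then Xs i ω a * Xs i ω b else 0) with hSab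
  have hμa : muUhat Xs Us m n ω a = N⁻¹ * Sa := rfl
  have hμb : muUhat Xs Us m n ω b = N⁻¹ * Sb := rfl
  have hpu : pUhat Us m n ω = N / n := rfl
  have hexp : ∑ i ∈ Finset.range n,
      (if Us i ω = m then
        (Xs i ω a - muUhat Xs Us m n ω a) * (Xs i ω b - muUhat Xs Us m n ω b) else 0)
      = Sab - muUhat Xs Us m n ω a * Sb - muUhat Xs Us m n ω b * Sa
        + muUhat Xs Us m n ω a * muUhat Xs Us m n ω b * N := by
    rw [hSab, hSa, hSb, hN, NU]
    rw [Finset.mul_sum, Finset.mul_sum, Finset.mul_sum, ← Finset.sum_sub_distrib,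
      ← Finset.sum_sub_distrib, ← Finset.sum_add_distrib]
    refine Finset.sum_congr rfl fun i _ => ?_
    by_cases h : Us i ω = m
    · simp only [if_pos h]; ring
    · simp [h]
  have hVdef : VUhat Xs Us m n ω a b = N⁻¹ * (Sab - muUhat Xs Us m n ω a * Sb
      - muUhat Xs Us m n ω b * Sa
      + muUhat Xs Us m n ω a * muUhat Xs Us m n ω b * N) := by
    rw [← hexp]; rfl
  rcases eq_or_ne N 0 with h0 | h0
  · have hz : ∀ i ∈ Finset.range n, Us i ω ≠ m := NU_eq_zero (hN ▸ h0)
    have hSa0 : Sa = 0 := by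
      rw [hSa]; exact Finset.sum_eq_zero (fun i hi => by simp [hz i hi])
    have hSb0 : Sb = 0 := by
      rw [hSb]; exact Finset.sum_eq_zero (fun i hi => by simp [hz i hi])
    have hSab0 : Sab = 0 := by
      rw [hSab]; exact Finset.sum_eq_zero (fun i hi => by simp [hz i hi])
    rw [hVdef, hμa, hμb, hpu, h0, hSa0, hSb0, hSab0]
    simp
  · rw [hVdef, hμa, hμb, hpu]
    field_simp
    ring
/-! Integrability of the moment integrands. -/

lemma sumsq_nonneg {p : ℕ} (x : Fin p → ℝ) : (0:ℝ) ≤ ∑ i, x i ^ 2 :=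
  Finset.sum_nonneg fun i _ => sq_nonneg _

lemma abs_mul_le_sumsq {p : ℕ} (x : Fin p → ℝ) (a b : Fin p) :
    |x a * x b| ≤ ∑ i, x i ^ 2 := by
  have ha : x a ^ 2 ≤ ∑ i, x i ^ 2 := by
    simpa using Finset.single_le_sum (f := fun i => x i ^ 2) (fun i _ => sq_nonneg _)
      (Finset.mem_univ a)
  have hb : x b ^ 2 ≤ ∑ i, x i ^ 2 := by
    simpa using Finset.single_le_sum (f := fun i => x i ^ 2) (fun i _ => sq_nonneg _)
      (Finset.mem_univ b)
  rw [abs_mul]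
  nlinarith [sq_nonneg (|x a| - |x b|), sq_abs (x a), sq_abs (x b),
    abs_nonneg (x a), abs_nonneg (x b)]

lemma abs_coord_le {p : ℕ} (x : Fin p → ℝ) (a : Fin p) :
    |x a| ≤ 1 + ∑ i, x i ^ 2 := by
  have ha : x a ^ 2 ≤ ∑ i, x i ^ 2 := by
    simpa using Finset.single_le_sum (f := fun i => x i ^ 2) (fun i _ => sq_nonneg _)
      (Finset.mem_univ a)
  have := abs_le_one_add_sq (x a)
  linarith

section Moments

variable {p M q : ℕ} {P : Measure Ω} [IsProbabilityMeasure P]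
  {X : Ω → Fin p → ℝ} {U : Ω → Fin M} {Z : Ω → Fin q}

lemma integrable_A (hX : Measurable X)
    (hmom : Integrable (fun ω => (∑ i, X ω i ^ 2) ^ 2) P) :
    Integrable (fun ω => ∑ i, X ω i ^ 2) P := by
  have hmeas : Measurable (fun ω => ∑ i, X ω i ^ 2) :=
    Finset.measurable_sum _ fun i _ => ((measurable_pi_apply i).comp hX).pow measurable_const
  refine Integrable.mono' ((integrable_const (1:ℝ)).add hmom) hmeas.aestronglyMeasurable
    (ae_of_all _ fun ω => ?_)
  rw [Real.norm_eq_abs]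
  have := abs_le_one_add_sq (∑ i, X ω i ^ 2)
  calc |∑ i, X ω i ^ 2| ≤ 1 + (∑ i, X ω i ^ 2) ^ 2 := this
    _ = (fun ω => 1 + (∑ i, X ω i ^ 2) ^ 2) ω := rfl

lemma integrable_if_mul (hX : Measurable X)
    (hmom : Integrable (fun ω => (∑ i, X ω i ^ 2) ^ 2) P)
    (c : Ω → Prop) [DecidablePred c] (hc : MeasurableSet {ω | c ω}) (a b : Fin p) :
    Integrable (fun ω => if c ω then X ω a * X ω b else 0) P := by
  have hmeas : Measurable (fun ω => if c ω then X ω a * X ω b else 0) :=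
    Measurable.ite hc (((measurable_pi_apply a).comp hX).mul
      ((measurable_pi_apply b).comp hX)) measurable_const
  refine Integrable.mono' (integrable_A hX hmom) hmeas.aestronglyMeasurable
    (ae_of_all _ fun ω => ?_)
  rw [Real.norm_eq_abs]
  by_cases h : c ω
  · rw [if_pos h]; exact abs_mul_le_sumsq (X ω) a b
  · rw [if_neg h, abs_zero]; exact sumsq_nonneg (X ω)

lemma integrable_if_coord (hX : Measurable X)
    (hmom : Integrable (fun ω => (∑ i, X ω i ^ 2) ^ 2) P)
    (c : Ω → Prop) [DecidablePred c] (hc : MeasurableSet {ω | c ω}) (a : Fin p) :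
    Integrable (fun ω => if c ω then X ω a else 0) P := by
  have hmeas : Measurable (fun ω => if c ω then X ω a else 0) :=
    Measurable.ite hc ((measurable_pi_apply a).comp hX) measurable_const
  refine Integrable.mono' ((integrable_const (1:ℝ)).add (integrable_A hX hmom))
    hmeas.aestronglyMeasurable (ae_of_all _ fun ω => ?_)
  rw [Real.norm_eq_abs]
  by_cases h : c ω
  · rw [if_pos h]; exact abs_coord_le (X ω) a
  · rw [if_neg h, abs_zero]
    have := sumsq_nonneg (X ω)
    show (0:ℝ) ≤ 1 + ∑ i, X ω i ^ 2
    linarith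

lemma integrable_if_one (c : Ω → Prop) [DecidablePred c] (hc : MeasurableSet {ω | c ω}) :
    Integrable (fun ω => if c ω then (1:ℝ) else 0) P := by
  have hmeas : Measurable (fun ω => if c ω then (1:ℝ) else 0) :=
    Measurable.ite hc measurable_const measurable_const
  refine Integrable.mono' (integrable_const (1:ℝ)) hmeas.aestronglyMeasurable
    (ae_of_all _ fun ω => ?_)
  rw [Real.norm_eq_abs]
  by_cases h : c ω <;> simp [h]

lemma measurableSet_U (hU : Measurable U) (m : Fin M) : MeasurableSet {ω | U ω = m} := by
  have : {ω | U ω = m} = U ⁻¹' {m} := by ext ω; simp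
  rw [this]; exact hU (measurableSet_singleton m)

lemma measurableSet_ZU (hU : Measurable U) (hZ : Measurable Z) (l : Fin q) (m : Fin M) :
    MeasurableSet {ω | Z ω = l ∧ U ω = m} := by
  have : {ω | Z ω = l ∧ U ω = m} = Z ⁻¹' {l} ∩ U ⁻¹' {m} := by ext ω; simp [Set.mem_inter_iff]
  rw [this]; exact (hZ (measurableSet_singleton l)).inter (hU (measurableSet_singleton m))

/-- Expansion of the conditional covariance in terms of raw moments. -/
lemma VU_eq (hX : Measurable X) (hU : Measurable U)
    (hmom : Integrable (fun ω => (∑ i, X ω i ^ 2) ^ 2) P)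
    (hpU : ∀ m, 0 < pU P U m) (m : Fin M) (a b : Fin p) :
    VU P X U m a b = (pU P U m)⁻¹ * (∫ ω, (if U ω = m then X ω a * X ω b else 0) ∂P)
      - muU P X U m a * muU P X U m b := by
  have hc := measurableSet_U hU m
  set μa := muU P X U m a with hμa
  set μb := muU P X U m b with hμb
  have hf2 := integrable_if_mul hX hmom (fun ω => U ω = m) hc a b
  have hf3a := integrable_if_coord hX hmom (fun ω => U ω = m) hc a
  have hf3b := integrable_if_coord hX hmom (fun ω => U ω = m) hc b
  have hf1 := integrable_if_one (P := P) (fun ω => U ω = m) hc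
  have hpt : ∀ ω, (if U ω = m then (X ω a - μa) * (X ω b - μb) else 0)
      = (if U ω = m then X ω a * X ω b else 0)
        - μa * (if U ω = m then X ω b else 0)
        - μb * (if U ω = m then X ω a else 0)
        + μa * μb * (if U ω = m then (1:ℝ) else 0) := by
    intro ω
    by_cases h : U ω = m
    · simp only [if_pos h]; ring
    · simp [h]
  have h2' : Integrable (fun ω => μa * (if U ω = m then X ω b else 0)) P :=
    hf3b.const_mul μa
  have h3' : Integrable (fun ω => μb * (if U ω = m then X ω a else 0)) P :=
    hf3a.const_mul μb
  have h12 : Integrable (fun ω => (if U ω = m then X ω a * X ω b else 0)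
      - μa * (if U ω = m then X ω b else 0)) P := hf2.sub h2'
  have h123 : Integrable (fun ω => (if U ω = m then X ω a * X ω b else 0)
      - μa * (if U ω = m then X ω b else 0)
      - μb * (if U ω = m then X ω a else 0)) P := h12.sub h3'
  have h4 : Integrable (fun ω => μa * μb * (if U ω = m then (1:ℝ) else 0)) P :=
    hf1.const_mul _
  have hVdef : VU P X U m a b
      = (pU P U m)⁻¹ * ∫ ω, (if U ω = m then (X ω a - μa) * (X ω b - μb) else 0) ∂P := rfl
  rw [hVdef, integral_congr_ae (ae_of_all _ hpt)]
  rw [integral_add h123 h4, integral_sub h12 h3', integral_sub hf2 h2',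
    integral_const_mul, integral_const_mul, integral_const_mul]
  rw [integral_if_one (fun ω => U ω = m) hc]
  have hIa : μa = (pU P U m)⁻¹ * ∫ ω, (if U ω = m then X ω a else 0) ∂P := rfl
  have hIb : μb = (pU P U m)⁻¹ * ∫ ω, (if U ω = m then X ω b else 0) ∂P := rfl
  have hpne : pU P U m ≠ 0 := (hpU m).ne'
  show (pU P U m)⁻¹ * (_ - μa * _ - μb * _ + μa * μb * pU P U m) = _
  rw [hIa, hIb]
  field_simp
  ring

end Moments
lemma TendsZeroP.congr' {P : Measure Ω} {f g : ℕ → Ω → ℝ} (h : TendsZeroP P f)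
    (heq : ∀ᶠ n in atTop, ∀ ω, f n ω = g n ω) : TendsZeroP P g :=
  h.mono (by filter_upwards [heq] with n hn ω; rw [hn ω])

lemma RateO.congr'' {P : Measure Ω} {f g : ℕ → Ω → ℝ} {c d : ℝ} (h : RateO P f c)
    (heq : ∀ᶠ n in atTop, ∀ ω, f n ω = g n ω) (hcd : c = d) : RateO P g d :=
  fun β h1 h2 => (h β h1 h2).congr'
    (by filter_upwards [heq] with n hn ω; rw [hn ω, hcd])

lemma RateOM.congrM {ι κ : Type*} {P : Measure Ω} {F G : ℕ → Ω → Matrix ι κ ℝ}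
    {C D : Matrix ι κ ℝ} (h : RateOM P F C) (heq : ∀ n ω, F n ω = G n ω) (hCD : C = D) :
    RateOM P G D := fun a b => (h a b).congr (fun n ω => by rw [heq n ω]) (by rw [hCD])

lemma measurableSet_eq_fun'' {α β : Type*} [MeasurableSpace α] [MeasurableSpace β]
    [MeasurableSingletonClass β] {f : α → β} (hf : Measurable f) (b : β) :
    MeasurableSet {a | f a = b} := by
  have : {a | f a = b} = f ⁻¹' {b} := by ext; simp
  rw [this]; exact hf (measurableSet_singleton b)

lemma measurableSet_and' {α : Type*} [MeasurableSpace α] {c d : α → Prop}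
    (hc : MeasurableSet {a | c a}) (hd : MeasurableSet {a | d a}) :
    MeasurableSet {a | c a ∧ d a} := by
  rw [Set.setOf_and]; exact hc.inter hd

end Aux
/-- Proposition 2. -/
theorem stmt16
    {Ω : Type} [MeasurableSpace Ω] (P : Measure Ω) [IsProbabilityMeasure P]
    (p q M : ℕ) (hp : 1 ≤ p) (hq : 2 ≤ q) (hM : 1 ≤ M)
    (X : Ω → Fin p → ℝ) (U : Ω → Fin M) (Z : Ω → Fin q)
    (hX : Measurable X) (hU : Measurable U) (hZ : Measurable Z)
    (hmom : Integrable (fun ω => (∑ i, X ω i ^ 2) ^ 2) P)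
    (hpU : ∀ m, 0 < pU P U m) (hpZU : ∀ l m, 0 < pZU P U Z l m)
    (hV : ∀ m, (VU P X U m).PosDef)
    (hp2 : 2 ≤ p)
    (σ : Equiv.Perm (Fin p))
    (hsort : ∀ i j : Fin p, i ≤ j → xiK P X U Z (Kc (σ j)) ≤ xiK P X U Z (Kc (σ i)))
    (hties : ∀ i j : Fin p, i < j →
      xiK P X U Z (Kc (σ i)) = xiK P X U Z (Kc (σ j)) → σ i < σ j)
    (Xs : ℕ → Ω → Fin p → ℝ) (Us : ℕ → Ω → Fin M) (Zs : ℕ → Ω → Fin q)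
    (hiid : IsIIDSample P X U Z Xs Us Zs)
    (alpha : ℝ) (halpha0 : 0 < alpha) (halpha1 : alpha < 1 / 2)
    (i j : Fin p) (hij : (i : ℕ) + 1 = (j : ℕ))
    (heq : xiK P X U Z (Kc (σ i)) = xiK P X U Z (Kc (σ j))) :
    TendstoInMeasure P
      (fun (n : ℕ) (ω : Ω) => (n : ℝ) ^ alpha *
        (xiKhat Xs Us Zs (Kc (σ i)) n ω - xiKhat Xs Us Zs (Kc (σ j)) n ω))
      atTop (fun _ => (0 : ℝ)) := by
  classical
  have hev : ∀ᶠ n : ℕ in atTop, (n:ℝ) ≠ 0 := by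
    filter_upwards [eventually_ge_atTop 1] with n hn
    exact Nat.cast_ne_zero.2 (Nat.one_le_iff_ne_zero.1 hn)
  have hA : Integrable (fun ω => ∑ k, X ω k ^ 2) P := integrable_A hX hmom
  have hXc : ∀ a : Fin p, Measurable fun ω => X ω a :=
    fun a => (measurable_pi_apply a).comp hX
  -- measurable conditions on the product space
  have hmU : ∀ m : Fin M,
      MeasurableSet {t : (Fin p → ℝ) × Fin M × Fin q | t.2.1 = m} :=
    fun m => measurableSet_eq_fun'' (measurable_fst.comp measurable_snd) m
  have hmZU : ∀ (l : Fin q) (m : Fin M),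
      MeasurableSet {t : (Fin p → ℝ) × Fin M × Fin q | t.2.2 = l ∧ t.2.1 = m} :=
    fun l m => measurableSet_and'
      (measurableSet_eq_fun'' (measurable_snd.comp measurable_snd) l)
      (measurableSet_eq_fun'' (measurable_fst.comp measurable_snd) m)
  -- Base empirical statistics
  have RpU : ∀ m, RateO P (fun n ω => pUhat Us m n ω) (pU P U m) := by
    intro m
    have hw : Measurable (fun t : (Fin p → ℝ) × Fin M × Fin q =>
        if t.2.1 = m then (1:ℝ) else 0) :=
      Measurable.ite (hmU m) measurable_const measurable_const
    have hL2 : MemLp (fun ω => if U ω = m then (1:ℝ) else 0) 2 P := by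
      refine memℒp_of_sq_le (Measurable.ite (measurableSet_U hU m) measurable_const
        measurable_const) (integrable_const 1) (fun ω => ?_)
      by_cases h : U ω = m <;> simp [h]
    refine (rate_emp hiid _ hw hL2).congr (fun n ω => ?_) ?_
    · rw [pUhat_eq]; rfl
    · show ∫ ω, (if U ω = m then (1:ℝ) else 0) ∂P = _
      rw [integral_if_one (fun ω => U ω = m) (measurableSet_U hU m)]; rfl
  have RNZ : ∀ l m, RateO P (fun n ω => (n:ℝ)⁻¹ * NZU Us Zs l m n ω) (pZU P U Z l m) := by
    intro l m
    have hw : Measurable (fun t : (Fin p → ℝ) × Fin M × Fin q =>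
        if t.2.2 = l ∧ t.2.1 = m then (1:ℝ) else 0) :=
      Measurable.ite (hmZU l m) measurable_const measurable_const
    have hL2 : MemLp (fun ω => if Z ω = l ∧ U ω = m then (1:ℝ) else 0) 2 P := by
      refine memℒp_of_sq_le (Measurable.ite (measurableSet_ZU hU hZ l m) measurable_const
        measurable_const) (integrable_const 1) (fun ω => ?_)
      by_cases h : Z ω = l ∧ U ω = m <;> simp [h]
    refine (rate_emp hiid _ hw hL2).congr (fun n ω => rfl) ?_
    show ∫ ω, (if Z ω = l ∧ U ω = m then (1:ℝ) else 0) ∂P = _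
    rw [integral_if_one (fun ω => Z ω = l ∧ U ω = m) (measurableSet_ZU hU hZ l m)]; rfl
  have RS1 : ∀ m (a : Fin p), RateO P
      (fun n ω => (n:ℝ)⁻¹ * ∑ k ∈ Finset.range n, if Us k ω = m then Xs k ω a else 0)
      (∫ ω, (if U ω = m then X ω a else 0) ∂P) := by
    intro m a
    have hw : Measurable (fun t : (Fin p → ℝ) × Fin M × Fin q =>
        if t.2.1 = m then t.1 a else 0) :=
      Measurable.ite (hmU m) ((measurable_pi_apply a).comp measurable_fst) measurable_const
    have hL2 : MemLp (fun ω => if U ω = m then X ω a else 0) 2 P := by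
      refine memℒp_of_sq_le (Measurable.ite (measurableSet_U hU m) (hXc a)
        measurable_const) hA (fun ω => ?_)
      have ha : X ω a ^ 2 ≤ ∑ k, X ω k ^ 2 := by
        simpa using Finset.single_le_sum (f := fun k => X ω k ^ 2)
          (fun k _ => sq_nonneg _) (Finset.mem_univ a)
      by_cases h : U ω = m
      · simpa [h] using ha
      · simpa [h] using sumsq_nonneg (X ω)
    exact (rate_emp hiid _ hw hL2).congr (fun n ω => rfl) rfl
  have RT1 : ∀ l m (a : Fin p), RateO P
      (fun n ω => (n:ℝ)⁻¹ * ∑ k ∈ Finset.range n,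
        if Zs k ω = l ∧ Us k ω = m then Xs k ω a else 0)
      (∫ ω, (if Z ω = l ∧ U ω = m then X ω a else 0) ∂P) := by
    intro l m a
    have hw : Measurable (fun t : (Fin p → ℝ) × Fin M × Fin q =>
        if t.2.2 = l ∧ t.2.1 = m then t.1 a else 0) :=
      Measurable.ite (hmZU l m) ((measurable_pi_apply a).comp measurable_fst) measurable_const
    have hL2 : MemLp (fun ω => if Z ω = l ∧ U ω = m then X ω a else 0) 2 P := by
      refine memℒp_of_sq_le (Measurable.ite (measurableSet_ZU hU hZ l m) (hXc a)
        measurable_const) hA (fun ω => ?_)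
      have ha : X ω a ^ 2 ≤ ∑ k, X ω k ^ 2 := by
        simpa using Finset.single_le_sum (f := fun k => X ω k ^ 2)
          (fun k _ => sq_nonneg _) (Finset.mem_univ a)
      by_cases h : Z ω = l ∧ U ω = m
      · simpa [h] using ha
      · simpa [h] using sumsq_nonneg (X ω)
    exact (rate_emp hiid _ hw hL2).congr (fun n ω => rfl) rfl
  have RS2 : ∀ m (a b : Fin p), RateO P
      (fun n ω => (n:ℝ)⁻¹ * ∑ k ∈ Finset.range n,
        if Us k ω = m then Xs k ω a * Xs k ω b else 0)
      (∫ ω, (if U ω = m then X ω a * X ω b else 0) ∂P) := by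
    intro m a b
    have hw : Measurable (fun t : (Fin p → ℝ) × Fin M × Fin q =>
        if t.2.1 = m then t.1 a * t.1 b else 0) :=
      Measurable.ite (hmU m) (((measurable_pi_apply a).comp measurable_fst).mul
        ((measurable_pi_apply b).comp measurable_fst)) measurable_const
    have hL2 : MemLp (fun ω => if U ω = m then X ω a * X ω b else 0) 2 P := by
      refine memℒp_of_sq_le (Measurable.ite (measurableSet_U hU m)
        ((hXc a).mul (hXc b)) measurable_const) hmom (fun ω => ?_)
      have ha : (X ω a * X ω b) ^ 2 ≤ (∑ k, X ω k ^ 2) ^ 2 := by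
        rw [← sq_abs (X ω a * X ω b)]
        exact pow_le_pow_left₀ (abs_nonneg _) (abs_mul_le_sumsq (X ω) a b) 2
      by_cases h : U ω = m
      · simpa [h] using ha
      · simpa [h] using sq_nonneg (∑ k, X ω k ^ 2)
    exact (rate_emp hiid _ hw hL2).congr (fun n ω => rfl) rfl
  -- Derived plug-in quantities
  have RmuU : ∀ m (a : Fin p),
      RateO P (fun n ω => muUhat Xs Us m n ω a) (muU P X U m a) := by
    intro m a
    refine (((RpU m).inv (hpU m).ne').mul (RS1 m a)).congr'' ?_ rfl
    filter_upwards [hev] with n hn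
    intro ω
    exact (muUhat_eq hn ω a).symm
  have RmuZU : ∀ l m (a : Fin p),
      RateO P (fun n ω => muZUhat Xs Us Zs l m n ω a) (muZU P X U Z l m a) := by
    intro l m a
    refine (((RNZ l m).inv (hpZU l m).ne').mul (RT1 l m a)).congr'' ?_ rfl
    filter_upwards [hev] with n hn
    intro ω
    rw [muZUhat_eq hn ω a, div_eq_inv_mul (NZU Us Zs l m n ω) (n:ℝ)]
  have Rpcond : ∀ l m,
      RateO P (fun n ω => pcondhat Us Zs l m n ω) (pcond P U Z l m) := by
    intro l m
    refine ((RNZ l m).div (RpU m) (hpU m).ne').congr'' ?_ rfl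
    filter_upwards [hev] with n hn
    intro ω
    exact (pcondhat_eq hn ω).symm
  have RVU : ∀ m, RateOM P (fun n ω => VUhat Xs Us m n ω) (VU P X U m) := by
    intro m a b
    refine ((((RpU m).inv (hpU m).ne').mul (RS2 m a b)).sub
      ((RmuU m a).mul (RmuU m b))).congr'' ?_ ?_
    · filter_upwards [hev] with n hn
      intro ω
      exact (VUhat_eq hn ω a b).symm
    · exact (VU_eq hX hU hmom hpU m a b).symm
  have RQ : ∀ m (K : Finset (Fin p)), RateOM P
      (fun n ω => QK K (VUhat Xs Us m n ω)) (QK K (VU P X U m)) := by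
    intro m K
    have hdet : (AK K * VU P X U m * (AK K)ᵀ).det ≠ 0 :=
      (posdef_AK (hV m) K).det_pos.ne'
    have RB : RateOM P (fun n ω => AK K * VUhat Xs Us m n ω * (AK K)ᵀ)
        (AK K * VU P X U m * (AK K)ᵀ) :=
      ((RateOM.const P (AK K)).matmul (RVU m)).matmul (RateOM.const P (AK K)ᵀ)
    exact (((RateOM.const P (AK K)ᵀ).matmul (RB.inv hdet)).matmul
      (RateOM.const P (AK K))).congrM (fun n ω => rfl) rfl
  have Rvec : ∀ (K : Finset (Fin p)) m l (a : Fin p), RateO P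
      (fun n ω => ((1 - VUhat Xs Us m n ω * QK K (VUhat Xs Us m n ω)) *ᵥ
        (muZUhat Xs Us Zs l m n ω - muUhat Xs Us m n ω)) a)
      (((1 - VU P X U m * QK K (VU P X U m)) *ᵥ
        (muZU P X U Z l m - muU P X U m)) a) := by
    intro K m l a
    have RIVQ : RateOM P
        (fun n ω => 1 - VUhat Xs Us m n ω * QK K (VUhat Xs Us m n ω))
        (1 - VU P X U m * QK K (VU P X U m)) :=
      (RateOM.const P 1).sub ((RVU m).matmul (RQ m K))
    refine (RateO.finsum Finset.univ _ _
      (fun b _ => (RIVQ a b).mul ((RmuZU l m b).sub (RmuU m b)))).congr ?_ ?_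
    · intro n ω
      simp [Matrix.mulVec, dotProduct, Pi.sub_apply]
    · simp [Matrix.mulVec, dotProduct, Pi.sub_apply]
  have RxiKm : ∀ (K : Finset (Fin p)) m, RateO P
      (fun n ω => xiKmhat Xs Us Zs K m n ω) (xiKm P X U Z K m) := by
    intro K m
    have Resq : ∀ l, RateO P
        (fun n ω => esq ((1 - VUhat Xs Us m n ω * QK K (VUhat Xs Us m n ω)) *ᵥ
          (muZUhat Xs Us Zs l m n ω - muUhat Xs Us m n ω)))
        (esq ((1 - VU P X U m * QK K (VU P X U m)) *ᵥ
          (muZU P X U Z l m - muU P X U m))) := by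
      intro l
      refine (RateO.finsum Finset.univ _ _ (fun a _ => (Rvec K m l a).sq)).congr ?_ ?_
      · intro n ω; simp [esq]
      · simp [esq]
    refine (RateO.finsum Finset.univ _ _
      (fun l _ => (Rpcond l m).sq.mul (Resq l))).congr ?_ ?_
    · intro n ω; simp [xiKmhat]
    · simp [xiKm]
  have RxiK : ∀ (K : Finset (Fin p)), RateO P
      (fun n ω => xiKhat Xs Us Zs K n ω) (xiK P X U Z K) := by
    intro K
    refine (RateO.finsum Finset.univ _ _
      (fun m _ => (RpU m).sq.mul (RxiKm K m))).congr ?_ ?_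
    · intro n ω; simp [xiKhat]
    · simp [xiK]
  have hD : RateO P (fun n ω => xiKhat Xs Us Zs (Kc (σ i)) n ω
      - xiKhat Xs Us Zs (Kc (σ j)) n ω) 0 :=
    ((RxiK (Kc (σ i))).sub (RxiK (Kc (σ j)))).congr (fun _ _ => rfl)
      (by rw [heq, sub_self])
  have h := hD alpha halpha0 halpha1
  exact (h.congr (fun n ω => by rw [sub_zero])).tim

end ArxivStmt
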